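/- Let g ≥ 1, let S_1 ≤ S_2 ≤ … ≤ S_g be positive integers, set A_i := Σ_{k=1}^g min(S_i, S_k), let L be an integer with L > 2·A_g, and let B be the g×g matrix with entries B_{ij} := (L − 2A_i)·δ_{ij} + 2·min(S_i, S_j). Let s := (S_1, …, S_g) ∈ ℝ^g, e := (1,…,1) ∈ ℝ^g, and c ∈ ℝ^g. For n, t ∈ ℤ define Θ_n^t := Θ(n·e − t·s + c; B) and U_n^t := Θ_n^t + Θ_{n+1}^{t+1} − Θ_{n+1}^t − Θ_n^{t+1}. Then U satisfies the periodic boundary condition U_{n+L}^t = U_n^t for all n, t ∈ ℤ. -/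

import Mathlib

open scoped BigOperators

/-- The tropical theta function `Θ(z; B) = min_{m ∈ ℤ^g} [(1/2)⟨m, B m⟩ + ⟨m, z⟩]`,
defined as an infimum. -/
noncomputable def tropTheta (g : ℕ) (B : Matrix (Fin g) (Fin g) ℝ) (z : Fin g → ℝ) : ℝ :=
  sInf {x : ℝ | ∃ m : Fin g → ℤ,
    x = (1/2) * ∑ i, (m i : ℝ) * (∑ j, B i j * (m j : ℝ)) + ∑ i, (m i : ℝ) * z i}

private lemma sInf_add_const' (S : Set ℝ) (hne : S.Nonempty) (hbd : BddBelow S) (c : ℝ) :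
    sInf ((fun x => x + c) '' S) = sInf S + c := by
  have h1 : BddBelow ((fun x => x + c) '' S) := by
    obtain ⟨b, hb⟩ := hbd
    exact ⟨b + c, by rintro x ⟨y, hy, rfl⟩; exact add_le_add_left (hb hy) c⟩
  apply le_antisymm
  · rw [← sub_le_iff_le_add]
    apply le_csInf hne
    intro x hx
    rw [sub_le_iff_le_add]
    exact csInf_le h1 ⟨x, hx, rfl⟩
  · apply le_csInf (hne.image _)
    rintro x ⟨y, hy, rfl⟩
    exact add_le_add_left (csInf_le hbd hy) c

private lemma min_sum_repr (a b T : ℤ) (ha : 0 < a) (hb : 0 < b) (haT : a ≤ T) (_hbT : b ≤ T) :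
    ((min a b : ℤ) : ℝ) =
      ∑ t ∈ Finset.Icc (1:ℤ) T, (if t ≤ a then (1:ℝ) else 0) * (if t ≤ b then (1:ℝ) else 0) := by
  have h1 : ∀ t : ℤ, (if t ≤ a then (1:ℝ) else 0) * (if t ≤ b then (1:ℝ) else 0)
      = if t ≤ min a b then (1:ℝ) else 0 := by
    intro t; by_cases h1 : t ≤ a <;> by_cases h2 : t ≤ b <;> simp [h1, h2, le_min_iff]
  simp_rw [h1]
  rw [← Finset.sum_filter]
  have h2 : (Finset.Icc (1:ℤ) T).filter (· ≤ min a b) = Finset.Icc 1 (min a b) := by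
    ext t; simp only [Finset.mem_filter, Finset.mem_Icc]; omega
  rw [h2, Finset.sum_const, Int.card_Icc]
  have : (min a b + 1 - 1).toNat = (min a b).toNat := by omega
  rw [this]
  simp only [nsmul_eq_mul, mul_one]
  rw [← Int.cast_natCast, Int.toNat_of_nonneg (by omega : (0:ℤ) ≤ min a b)]

private lemma min_quad_nonneg (g : ℕ) (S : Fin g → ℤ) (hpos : ∀ i, 0 < S i) (T : ℤ)
    (hT : ∀ i, S i ≤ T) (x : Fin g → ℝ) :
    0 ≤ ∑ i, ∑ j, ((min (S i) (S j) : ℤ) : ℝ) * (x i * x j) := by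
  have key : ∀ i j : Fin g, ((min (S i) (S j) : ℤ) : ℝ) * (x i * x j)
      = ∑ t ∈ Finset.Icc (1:ℤ) T,
          ((if t ≤ S i then (1:ℝ) else 0) * x i) * ((if t ≤ S j then (1:ℝ) else 0) * x j) := by
    intro i j
    rw [min_sum_repr (S i) (S j) T (hpos i) (hpos j) (hT i) (hT j), Finset.sum_mul]
    apply Finset.sum_congr rfl
    intro t _
    ring
  simp_rw [key]
  have swap : ∑ i : Fin g, ∑ j : Fin g, ∑ t ∈ Finset.Icc (1:ℤ) T,
        ((if t ≤ S i then (1:ℝ) else 0) * x i) * ((if t ≤ S j then (1:ℝ) else 0) * x j)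
      = ∑ t ∈ Finset.Icc (1:ℤ) T,
          (∑ i : Fin g, (if t ≤ S i then (1:ℝ) else 0) * x i) *
          (∑ j : Fin g, (if t ≤ S j then (1:ℝ) else 0) * x j) := by
    have step1 : ∀ i : Fin g, ∑ j : Fin g, ∑ t ∈ Finset.Icc (1:ℤ) T,
          ((if t ≤ S i then (1:ℝ) else 0) * x i) * ((if t ≤ S j then (1:ℝ) else 0) * x j)
        = ∑ t ∈ Finset.Icc (1:ℤ) T, ∑ j : Fin g,
          ((if t ≤ S i then (1:ℝ) else 0) * x i) * ((if t ≤ S j then (1:ℝ) else 0) * x j) := by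
      intro i; exact Finset.sum_comm
    simp_rw [step1]
    rw [Finset.sum_comm]
    apply Finset.sum_congr rfl
    intro t _
    rw [Finset.sum_mul_sum]
  rw [swap]
  apply Finset.sum_nonneg
  intro t _
  exact mul_self_nonneg _

private lemma tropTheta_shift (g : ℕ) (B : Matrix (Fin g) (Fin g) ℝ) (L : ℝ)
    (hrow : ∀ i, ∑ j, B i j = L) (hcol : ∀ j, ∑ i, B i j = L)
    (hQ : ∀ m : Fin g → ℤ, (∑ i, ((m i : ℝ))^2) ≤ ∑ i, (m i : ℝ) * ∑ j, B i j * (m j : ℝ))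
    (z : Fin g → ℝ) :
    tropTheta g B (fun i => z i + L) = tropTheta g B z - (∑ i, z i) - L * g / 2 := by
  set f : (Fin g → ℤ) → (Fin g → ℝ) → ℝ := fun m w =>
    (1/2) * ∑ i, (m i : ℝ) * (∑ j, B i j * (m j : ℝ)) + ∑ i, (m i : ℝ) * w i with hf
  set C : ℝ := -(∑ i, z i) - L * g / 2 with hC
  set Sz : Set ℝ := {x : ℝ | ∃ m : Fin g → ℤ, x = f m z} with hSz
  have hne : Sz.Nonempty := ⟨f 0 z, 0, rfl⟩
  have hbd : BddBelow Sz := by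
    refine ⟨∑ i, (-(1/2) * (z i)^2), ?_⟩
    rintro x ⟨m, rfl⟩
    have h1 : ∑ i, (-(1/2) * (z i)^2) ≤ ∑ i, ((1/2) * ((m i : ℝ))^2 + (m i : ℝ) * z i) := by
      apply Finset.sum_le_sum
      intro i _
      nlinarith [sq_nonneg ((m i : ℝ) + z i)]
    have h2 : ∑ i, ((1/2) * ((m i : ℝ))^2 + (m i : ℝ) * z i)
        = (1/2) * (∑ i, ((m i : ℝ))^2) + ∑ i, (m i : ℝ) * z i := by
      rw [Finset.sum_add_distrib, Finset.mul_sum]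
    have h3 := hQ m
    calc ∑ i, (-(1/2) * (z i)^2) ≤ (1/2) * (∑ i, ((m i : ℝ))^2) + ∑ i, (m i : ℝ) * z i := by
          rw [← h2]; exact h1
      _ ≤ f m z := by simp only [hf]; linarith
  have hpoint : ∀ m : Fin g → ℤ, f m (fun i => z i + L) = f (fun i => m i + 1) z + C := by
    intro m
    have hinner : ∀ i, (∑ j, B i j * (((m j + 1 : ℤ) : ℝ))) = (∑ j, B i j * (m j : ℝ)) + L := by
      intro i
      rw [← hrow i, ← Finset.sum_add_distrib]
      apply Finset.sum_congr rfl
      intro j _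
      push_cast
      ring
    have hRsum : ∑ i, ∑ j, B i j * (m j : ℝ) = L * ∑ j, (m j : ℝ) := by
      rw [Finset.sum_comm, Finset.mul_sum]
      apply Finset.sum_congr rfl
      intro j _
      rw [← Finset.sum_mul, hcol j]
    simp only [hf]
    simp_rw [hinner]
    push_cast
    have expand : ∑ i, ((m i : ℝ) + 1) * ((∑ j, B i j * (m j : ℝ)) + L)
        = ∑ i, (m i : ℝ) * (∑ j, B i j * (m j : ℝ))
          + ∑ i, ∑ j, B i j * (m j : ℝ)
          + L * (∑ i, (m i : ℝ)) + L * g := by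
      rw [Finset.mul_sum]
      have : ∀ i : Fin g, ((m i : ℝ) + 1) * ((∑ j, B i j * (m j : ℝ)) + L)
          = (m i : ℝ) * (∑ j, B i j * (m j : ℝ)) + (∑ j, B i j * (m j : ℝ))
            + L * (m i : ℝ) + L := by intro i; ring
      simp_rw [this]
      rw [Finset.sum_add_distrib, Finset.sum_add_distrib, Finset.sum_add_distrib,
        Finset.sum_const, Finset.card_univ, Fintype.card_fin]
      push_cast
      ring
    rw [expand, hRsum]
    have expand2 : ∑ i, ((m i : ℝ) + 1) * z i = ∑ i, (m i : ℝ) * z i + ∑ i, z i := by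
      rw [← Finset.sum_add_distrib]
      apply Finset.sum_congr rfl
      intro i _
      ring
    have expand3 : ∑ i, (m i : ℝ) * (z i + L) = ∑ i, (m i : ℝ) * z i + L * ∑ i, (m i : ℝ) := by
      rw [Finset.mul_sum, ← Finset.sum_add_distrib]
      apply Finset.sum_congr rfl
      intro i _
      ring
    rw [expand2, expand3, hC]
    ring
  have hset : {x : ℝ | ∃ m : Fin g → ℤ, x = f m (fun i => z i + L)} = (fun x => x + C) '' Sz := by
    ext x
    constructor
    · rintro ⟨m, rfl⟩
      exact ⟨f (fun i => m i + 1) z, ⟨fun i => m i + 1, rfl⟩, (hpoint m).symm⟩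
    · rintro ⟨y, ⟨m, rfl⟩, rfl⟩
      refine ⟨fun i => m i - 1, ?_⟩
      rw [hpoint (fun i => m i - 1)]
      congr 1
      apply congrArg (fun mm => f mm z)
      funext i
      omega
  show sInf _ = sInf Sz - (∑ i, z i) - L * g / 2
  have hrfl : {x : ℝ | ∃ m : Fin g → ℤ,
      x = (1/2) * ∑ i, (m i : ℝ) * (∑ j, B i j * (m j : ℝ)) + ∑ i, (m i : ℝ) * (z i + L)}
      = {x : ℝ | ∃ m : Fin g → ℤ, x = f m (fun i => z i + L)} := rfl
  rw [hrfl, hset, sInf_add_const' Sz hne hbd C, hC]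
  ring

/-- the tropical theta function solution of the periodic box and ball
system, `U n t = Θ n t + Θ (n+1) (t+1) - Θ (n+1) t - Θ n (t+1)` with
`Θ n t = Θ(n·e - t·s + c; B)` and period matrix
`B i j = (L - 2 A i) δ_{ij} + 2 min (S i) (S j)`, satisfies the periodic boundary
condition `U (n+L) t = U n t`. -/
theorem stmt15 (g : ℕ) (hg : 1 ≤ g) (S : Fin g → ℤ)
    (hpos : ∀ i, 0 < S i) (hmono : Monotone S)
    (A : Fin g → ℤ) (hA : ∀ i, A i = ∑ k, min (S i) (S k))
    (L : ℤ) (hL : L > 2 * A ⟨g - 1, by omega⟩)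
    (B : Matrix (Fin g) (Fin g) ℝ)
    (hB : ∀ i j, B i j = (((L : ℝ)) - 2 * ((A i : ℤ) : ℝ)) * (if i = j then 1 else 0)
        + 2 * ((min (S i) (S j) : ℤ) : ℝ))
    (c : Fin g → ℝ)
    (Θ : ℤ → ℤ → ℝ)
    (hΘ : ∀ n t : ℤ, Θ n t =
      tropTheta g B (fun i => (n : ℝ) * 1 - (t : ℝ) * ((S i : ℤ) : ℝ) + c i))
    (U : ℤ → ℤ → ℝ)
    (hU : ∀ n t : ℤ, U n t = Θ n t + Θ (n+1) (t+1) - Θ (n+1) t - Θ n (t+1)) :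
    ∀ n t : ℤ, U (n + L) t = U n t := by
  intro n t
  set imax : Fin g := ⟨g - 1, by omega⟩ with himax
  have hle : ∀ i, S i ≤ S imax := by
    intro i
    apply hmono
    rw [Fin.le_def]
    have := i.isLt
    simp only [himax]
    omega
  have hA_le : ∀ i, A i ≤ A imax := by
    intro i
    rw [hA, hA]
    exact Finset.sum_le_sum fun k _ => min_le_min (hle i) le_rfl
  have hL' : L > 2 * A imax := hL
  have hd : ∀ i, (1:ℤ) ≤ L - 2 * A i := by
    intro i
    have h1 := hA_le i
    omega
  have hAsum : ∀ i, ((A i : ℤ) : ℝ) = ∑ k, ((min (S i) (S k) : ℤ) : ℝ) := by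
    intro i
    rw [hA]
    push_cast
    rfl
  have hrow : ∀ i, ∑ j, B i j = (L : ℝ) := by
    intro i
    simp_rw [hB]
    rw [Finset.sum_add_distrib]
    have h1 : ∑ j, ((L:ℝ) - 2 * ((A i : ℤ) : ℝ)) * (if i = j then (1:ℝ) else 0)
        = (L:ℝ) - 2 * ((A i : ℤ) : ℝ) := by
      simp [mul_ite]
    have h2 : ∑ j : Fin g, 2 * ((min (S i) (S j) : ℤ) : ℝ) = 2 * ((A i : ℤ) : ℝ) := by
      rw [← Finset.mul_sum, ← hAsum i]
    rw [h1, h2]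
    ring
  have hsym : ∀ i j, B i j = B j i := by
    intro i j
    rw [hB i j, hB j i]
    by_cases h : i = j
    · subst h; simp
    · simp [h, Ne.symm h, min_comm]
  have hcol : ∀ j, ∑ i, B i j = (L : ℝ) := by
    intro j
    calc ∑ i, B i j = ∑ i, B j i := Finset.sum_congr rfl fun i _ => hsym i j
      _ = (L : ℝ) := hrow j
  have hQ : ∀ m : Fin g → ℤ,
      (∑ i, ((m i : ℝ))^2) ≤ ∑ i, (m i : ℝ) * ∑ j, B i j * (m j : ℝ) := by
    intro m
    have hBin : ∀ i, ∑ j, B i j * (m j : ℝ)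
        = ((L:ℝ) - 2 * ((A i : ℤ) : ℝ)) * (m i : ℝ)
          + 2 * ∑ j, ((min (S i) (S j) : ℤ) : ℝ) * (m j : ℝ) := by
      intro i
      simp_rw [hB, add_mul]
      rw [Finset.sum_add_distrib]
      congr 1
      · simp [mul_ite, ite_mul]
      · rw [Finset.mul_sum]
        apply Finset.sum_congr rfl
        intro j _
        ring
    simp_rw [hBin]
    have expand : ∑ i, (m i : ℝ) * (((L:ℝ) - 2 * ((A i : ℤ) : ℝ)) * (m i : ℝ)
          + 2 * ∑ j, ((min (S i) (S j) : ℤ) : ℝ) * (m j : ℝ))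
        = ∑ i, ((L:ℝ) - 2 * ((A i : ℤ) : ℝ)) * ((m i : ℝ))^2
          + 2 * ∑ i, ∑ j, ((min (S i) (S j) : ℤ) : ℝ) * ((m i : ℝ) * (m j : ℝ)) := by
      rw [Finset.mul_sum, ← Finset.sum_add_distrib]
      apply Finset.sum_congr rfl
      intro i _
      rw [mul_add]
      congr 1
      · ring
      · have hterm : ∀ j : Fin g, ((min (S i) (S j) : ℤ) : ℝ) * ((m i : ℝ) * (m j : ℝ))
            = (m i : ℝ) * (((min (S i) (S j) : ℤ) : ℝ) * (m j : ℝ)) := fun j => by ring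
        simp_rw [hterm, ← Finset.mul_sum]
        ring
    rw [expand]
    have hpsd := min_quad_nonneg g S hpos (S imax) hle (fun i => (m i : ℝ))
    have hfirst : ∑ i, ((m i : ℝ))^2 ≤ ∑ i, ((L:ℝ) - 2 * ((A i : ℤ) : ℝ)) * ((m i : ℝ))^2 := by
      apply Finset.sum_le_sum
      intro i _
      have h1 : (1:ℝ) ≤ (L:ℝ) - 2 * ((A i : ℤ) : ℝ) := by
        exact_mod_cast hd i
      nlinarith [sq_nonneg ((m i : ℝ))]
    linarith
  -- the shift identity for Θ
  have hshift : ∀ a b : ℤ, Θ (a + L) b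
      = Θ a b - (∑ i, ((a:ℝ) * 1 - (b:ℝ) * ((S i : ℤ) : ℝ) + c i)) - (L:ℝ) * g / 2 := by
    intro a b
    rw [hΘ, hΘ]
    have hfun : (fun i => ((a + L : ℤ) : ℝ) * 1 - (b:ℝ) * ((S i : ℤ) : ℝ) + c i)
        = fun i => ((a:ℝ) * 1 - (b:ℝ) * ((S i : ℤ) : ℝ) + c i) + (L:ℝ) := by
      funext i
      push_cast
      ring
    rw [hfun]
    exact tropTheta_shift g B (L:ℝ) hrow hcol hQ _
  have hsum : ∀ a b : ℤ, ∑ i, ((a:ℝ) * 1 - (b:ℝ) * ((S i : ℤ) : ℝ) + c i)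
      = (g:ℝ) * (a:ℝ) - (b:ℝ) * (∑ i, ((S i : ℤ) : ℝ)) + ∑ i, c i := by
    intro a b
    rw [Finset.sum_add_distrib, Finset.sum_sub_distrib, Finset.sum_const, ← Finset.mul_sum,
      Finset.card_univ, Fintype.card_fin]
    ring
  rw [hU, hU]
  have e1 := hshift n t
  have e2 : Θ (n + L + 1) (t + 1) = Θ (n + 1 + L) (t + 1) := by ring_nf
  have e3 : Θ (n + L + 1) t = Θ (n + 1 + L) t := by ring_nf
  rw [e2, e3, hshift n t, hshift (n+1) (t+1), hshift (n+1) t, hshift n (t+1)]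
  rw [hsum, hsum, hsum, hsum]
  push_cast
  ring
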